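/- arXiv:2506.02735 — 2 statements merged into one kernel-verified Lean document; each statement's English description precedes it below -/
import Mathlib

section
/- Let h ∈ ℂ^M be a Rician channel block with parameters (ξ, β_L, β_N, a), and set β = ξ·β_L + β_N. Then E[‖h‖⁴] = M²β² + M·β_N² + 2M·ξ·β_L·β_N. -/
open MeasureTheory ProbabilityTheory Finset

noncomputable section

/-- The uniform distribution on `[0, 2π)`. -/
def uniformAngle : Measure ℝ :=
  (ENNReal.ofReal (2 * Real.pi))⁻¹ • (volume.restrict (Set.Ico (0 : ℝ) (2 * Real.pi)))

lemma uniformAngle_integral (f : ℝ → ℝ) :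
    ∫ x, f x ∂uniformAngle = (2 * Real.pi)⁻¹ * ∫ x in (0:ℝ)..(2 * Real.pi), f x := by
  rw [uniformAngle, integral_smul_measure, intervalIntegral.integral_of_le
    (by positivity), MeasureTheory.integral_Ioc_eq_integral_Ioo,
    ← MeasureTheory.integral_Ico_eq_integral_Ioo]
  simp [ENNReal.toReal_inv, ENNReal.toReal_ofReal Real.two_pi_pos.le, smul_eq_mul, Real.pi_nonneg]

lemma uniformAngle_cos : ∫ x, Real.cos x ∂uniformAngle = 0 := by
  rw [uniformAngle_integral, integral_cos]; simp [Real.sin_two_pi]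

lemma uniformAngle_sin : ∫ x, Real.sin x ∂uniformAngle = 0 := by
  rw [uniformAngle_integral, integral_sin]; simp [Real.cos_two_pi]

lemma uniformAngle_cos_sq : ∫ x, Real.cos x ^ 2 ∂uniformAngle = 1 / 2 := by
  rw [uniformAngle_integral, integral_cos_sq]
  simp [Real.sin_two_pi, Real.cos_two_pi]
  field_simp

lemma uniformAngle_sin_sq : ∫ x, Real.sin x ^ 2 ∂uniformAngle = 1 / 2 := by
  rw [uniformAngle_integral, integral_sin_sq]
  simp [Real.sin_two_pi, Real.cos_two_pi]
  field_simp

lemma uniformAngle_sin_cos : ∫ x, Real.sin x * Real.cos x ∂uniformAngle = 0 := by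
  rw [uniformAngle_integral, integral_sin_mul_cos₁]; simp [Real.sin_two_pi]

lemma pow_le_one_add_pow_four {x : ℝ} (hx : 0 ≤ x) {k : ℕ} (hk : k ≤ 4) :
    x ^ k ≤ 1 + x ^ 4 := by
  rcases le_total x 1 with h1 | h1
  · exact (pow_le_one₀ hx h1).trans (le_add_of_nonneg_right (by positivity))
  · exact (pow_le_pow_right₀ h1 hk).trans (le_add_of_nonneg_left zero_le_one)

lemma exp_neg_I_theta (θ : ℝ) : Complex.exp (-(Complex.I * (θ:ℂ))) =
    (Real.cos θ : ℂ) - (Real.sin θ : ℂ) * Complex.I := by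
  rw [show -(Complex.I * (θ:ℂ)) = ((-θ : ℝ) : ℂ) * Complex.I by push_cast; ring,
    Complex.exp_mul_I]
  rw [Complex.ofReal_neg, Complex.cos_neg, Complex.sin_neg]
  push_cast
  ring

/-- A Rician channel block with parameters `(ξ, βL, βN, a)`: a random vector
`h = ξ·√βL·e^{−iψ}·a + g ∈ ℂ^M`, where `ξ ∈ {0,1}`, `βL, βN ≥ 0`, `a` is a deterministic
vector with unit-modulus entries, `ψ` is uniformly distributed on `[0, 2π)`, and `g` is
independent of `ψ` with independent coordinates satisfying `E[g_m] = 0`, `E[g_m²] = 0`,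
`E[|g_m|²] = βN` and `E[|g_m|⁴] = 2βN²` (as for `CN(0, βN)`). -/
structure IsRicianBlock {Ω : Type*} [MeasurableSpace Ω] (μ : Measure Ω) {M : ℕ}
    (ξ βL βN : ℝ) (a : Fin M → ℂ) (h : Ω → Fin M → ℂ) : Prop where
  xi01 : ξ = 0 ∨ ξ = 1
  betaL_nonneg : 0 ≤ βL
  betaN_nonneg : 0 ≤ βN
  unit_modulus : ∀ m, ‖a m‖ = 1
  decomp : ∃ (ψ : Ω → ℝ) (g : Ω → Fin M → ℂ),
      Measurable ψ ∧ Measurable g ∧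
      (∀ ω m, h ω m
        = (ξ : ℂ) * (Real.sqrt βL : ℂ) * Complex.exp (-(Complex.I * (ψ ω : ℂ))) * a m
          + g ω m) ∧
      μ.map ψ = uniformAngle ∧
      IndepFun ψ g μ ∧
      iIndepFun (fun m ω => g ω m) μ ∧
      (∀ m, Integrable (fun ω => ‖g ω m‖ ^ 4) μ) ∧
      (∀ m, ∫ ω, g ω m ∂μ = 0) ∧
      (∀ m, ∫ ω, (g ω m) ^ 2 ∂μ = 0) ∧
      (∀ m, ∫ ω, (‖g ω m‖ ^ 2 : ℝ) ∂μ = βN) ∧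
      (∀ m, ∫ ω, (‖g ω m‖ ^ 4 : ℝ) ∂μ = 2 * βN ^ 2)

set_option maxHeartbeats 2000000 in
/-- For a Rician channel block `h` with parameters `(ξ, βL, βN, a)` and
`β = ξ·βL + βN`, the fourth moment of the norm satisfies
`E[‖h‖⁴] = M²β² + M·βN² + 2M·ξ·βL·βN`. -/
theorem stmt7 {Ω : Type*} [MeasurableSpace Ω] (μ : Measure Ω) [IsProbabilityMeasure μ]
    (M : ℕ) (hM : 0 < M) (ξ βL βN : ℝ) (a : Fin M → ℂ) (h : Ω → Fin M → ℂ)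
    (hR : IsRicianBlock μ ξ βL βN a h) :
    ∫ ω, (∑ m, ‖h ω m‖ ^ 2) ^ 2 ∂μ
      = (M : ℝ) ^ 2 * (ξ * βL + βN) ^ 2 + M * βN ^ 2 + 2 * M * ξ * βL * βN := by
  obtain ⟨hξ, hβL, hβN, hA, ψ, g, hψm, hgm, hdec, hmap, hindep, hiind, hint4,
    hEg, _hEgsq, hEg2, hEg4⟩ := hR
  -- basic measurability
  have hgm' : ∀ m, Measurable (fun ω => g ω m) := fun m => (measurable_pi_apply m).comp hgm
  have habsm : ∀ m, Measurable (fun ω => ‖g ω m‖) := fun m =>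
    continuous_norm.measurable.comp (hgm' m)
  -- integrability of powers of |g m|
  have hIpow : ∀ m (k : ℕ), k ≤ 4 → Integrable (fun ω => ‖g ω m‖ ^ k) μ := by
    intro m k hk
    refine Integrable.mono' ((integrable_const 1).add (hint4 m))
      (((habsm m).pow_const k).aestronglyMeasurable) (ae_of_all _ fun ω => ?_)
    have h0 : (0:ℝ) ≤ ‖g ω m‖ := norm_nonneg _
    rw [Real.norm_eq_abs, abs_of_nonneg (pow_nonneg h0 k)]
    exact pow_le_one_add_pow_four h0 hk
  have hgInt : ∀ m, Integrable (fun ω => g ω m) μ := by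
    intro m
    refine Integrable.mono' ((integrable_const 1).add (hint4 m))
      ((hgm' m).aestronglyMeasurable) (ae_of_all _ fun ω => ?_)
    have h0 : (0:ℝ) ≤ ‖g ω m‖ := norm_nonneg _
    simpa [pow_one] using pow_le_one_add_pow_four h0 (by norm_num : 1 ≤ 4)
  have hgReInt : ∀ m, Integrable (fun ω => (g ω m).re) μ := fun m => by
    have := (hgInt m).re; simpa [RCLike.re_to_complex] using this
  have hgImInt : ∀ m, Integrable (fun ω => (g ω m).im) μ := fun m => by
    have := (hgInt m).im; simpa [RCLike.im_to_complex] using this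
  have hgRe : ∀ m, ∫ ω, (g ω m).re ∂μ = 0 := fun m => by
    have h1 := integral_re (hgInt m)
    simp only [RCLike.re_to_complex] at h1
    rw [h1, hEg m, Complex.zero_re]
  have hgIm : ∀ m, ∫ ω, (g ω m).im ∂μ = 0 := fun m => by
    have h1 := integral_im (hgInt m)
    simp only [RCLike.im_to_complex] at h1
    rw [h1, hEg m, Complex.zero_im]
  -- the coordinate functions
  set Fr : Fin M → ℂ → ℝ := fun m z => (a m * (starRingEnd ℂ) z).re with hFr
  set Fi : Fin M → ℂ → ℝ := fun m z => (a m * (starRingEnd ℂ) z).im with hFi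
  have hconjm : Measurable fun z : ℂ => (starRingEnd ℂ) z :=
    (RCLike.continuous_conj (K := ℂ)).measurable
  have hFrm : ∀ m, Measurable (Fr m) := fun m =>
    Complex.measurable_re.comp (measurable_const.mul hconjm)
  have hFim : ∀ m, Measurable (Fi m) := fun m =>
    Complex.measurable_im.comp (measurable_const.mul hconjm)
  have hFrb : ∀ m z, |Fr m z| ≤ ‖z‖ ^ 1 := by
    intro m z
    rw [pow_one, hFr]
    calc |(a m * (starRingEnd ℂ) z).re| ≤ ‖a m * (starRingEnd ℂ) z‖ :=
          Complex.abs_re_le_norm _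
      _ = ‖z‖ := by rw [norm_mul, hA m, Complex.norm_conj, one_mul]
  have hFib : ∀ m z, |Fi m z| ≤ ‖z‖ ^ 1 := by
    intro m z
    rw [pow_one, hFi]
    calc |(a m * (starRingEnd ℂ) z).im| ≤ ‖a m * (starRingEnd ℂ) z‖ :=
          Complex.abs_im_le_norm _
      _ = ‖z‖ := by rw [norm_mul, hA m, Complex.norm_conj, one_mul]
  have habsb : ∀ (k : ℕ), ∀ z : ℂ, |‖z‖ ^ k| ≤ ‖z‖ ^ k := fun k z =>
    le_of_eq (abs_of_nonneg (pow_nonneg (norm_nonneg _) k))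
  -- mean of Fr, Fi
  have hFrmean : ∀ m, ∫ ω, Fr m (g ω m) ∂μ = 0 := by
    intro m
    have hcongr : (fun ω => Fr m (g ω m))
        = fun ω => (a m).re * (g ω m).re + (a m).im * (g ω m).im := by
      funext ω
      simp [hFr, Complex.mul_re]
      try ring
    rw [hcongr, integral_add ((hgReInt m).const_mul _) ((hgImInt m).const_mul _),
      integral_const_mul, integral_const_mul, hgRe m, hgIm m]
    ring
  have hFimean : ∀ m, ∫ ω, Fi m (g ω m) ∂μ = 0 := by
    intro m
    have hcongr : (fun ω => Fi m (g ω m))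
        = fun ω => (a m).im * (g ω m).re - (a m).re * (g ω m).im := by
      funext ω
      simp [hFi, Complex.mul_im]
      try ring
    rw [hcongr, integral_sub ((hgReInt m).const_mul _) ((hgImInt m).const_mul _),
      integral_const_mul, integral_const_mul, hgRe m, hgIm m]
    ring
  -- single-factor integrability
  have hsingleInt : ∀ (p : ℕ), p ≤ 4 → ∀ (u : ℂ → ℝ), Measurable u →
      (∀ z, |u z| ≤ ‖z‖ ^ p) → ∀ m,
      Integrable (fun ω => u (g ω m)) μ := by
    intro p hp u hu hub m
    refine Integrable.mono' ((integrable_const 1).add (hint4 m))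
      ((hu.comp (hgm' m)).aestronglyMeasurable) (ae_of_all _ fun ω => ?_)
    have h0 : (0:ℝ) ≤ ‖g ω m‖ := norm_nonneg _
    rw [Real.norm_eq_abs]
    exact (hub _).trans (pow_le_one_add_pow_four h0 hp)
  -- product integrability
  have hprodInt : ∀ (p q : ℕ), p + q ≤ 4 → ∀ (u v : ℂ → ℝ), Measurable u → Measurable v →
      (∀ z, |u z| ≤ ‖z‖ ^ p) → (∀ z, |v z| ≤ ‖z‖ ^ q) → ∀ m n,
      Integrable (fun ω => u (g ω m) * v (g ω n)) μ := by
    intro p q hpq u v hu hv hub hvb m n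
    by_cases hmn : m = n
    · subst hmn
      refine Integrable.mono' ((integrable_const 1).add (hint4 m))
        (((hu.comp (hgm' m)).mul (hv.comp (hgm' m))).aestronglyMeasurable)
        (ae_of_all _ fun ω => ?_)
      have h0 : (0:ℝ) ≤ ‖g ω m‖ := norm_nonneg _
      rw [Real.norm_eq_abs, abs_mul]
      calc |u (g ω m)| * |v (g ω m)| ≤ ‖g ω m‖ ^ p * ‖g ω m‖ ^ q :=
            mul_le_mul (hub _) (hvb _) (abs_nonneg _) (pow_nonneg h0 p)
        _ = ‖g ω m‖ ^ (p + q) := (pow_add _ _ _).symm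
        _ ≤ 1 + ‖g ω m‖ ^ 4 := pow_le_one_add_pow_four h0 hpq
    · exact ((hiind.indepFun hmn).comp hu hv).integrable_mul
        (hsingleInt p (le_trans (Nat.le_add_right p q) hpq) u hu hub m)
        (hsingleInt q (le_trans (Nat.le_add_left q p) hpq) v hv hvb n)
  -- product integral values (off-diagonal)
  have hprodVal : ∀ (p q : ℕ), p ≤ 4 → q ≤ 4 → ∀ (u v : ℂ → ℝ), Measurable u → Measurable v →
      (∀ z, |u z| ≤ ‖z‖ ^ p) → (∀ z, |v z| ≤ ‖z‖ ^ q) → ∀ m n, m ≠ n →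
      ∫ ω, u (g ω m) * v (g ω n) ∂μ
        = (∫ ω, u (g ω m) ∂μ) * ∫ ω, v (g ω n) ∂μ := by
    intro p q hp hq u v hu hv hub hvb m n hmn
    exact ((hiind.indepFun hmn).comp hu hv).integral_fun_mul_eq_mul_integral
      (hsingleInt p hp u hu hub m).aestronglyMeasurable (hsingleInt q hq v hv hvb n).aestronglyMeasurable
  -- aggregated functions
  set FAr : (Fin M → ℂ) → ℝ := fun v => ∑ m, Fr m (v m) with hFAr
  set FAi : (Fin M → ℂ) → ℝ := fun v => ∑ m, Fi m (v m) with hFAi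
  set FG : (Fin M → ℂ) → ℝ := fun v => ∑ m, ‖v m‖ ^ 2 with hFG
  have hFArm : Measurable FAr := by
    rw [hFAr]; exact Finset.measurable_sum _ fun m _ => (hFrm m).comp (measurable_pi_apply m)
  have hFAim : Measurable FAi := by
    rw [hFAi]; exact Finset.measurable_sum _ fun m _ => (hFim m).comp (measurable_pi_apply m)
  have hFGm : Measurable FG := by
    rw [hFG]
    exact Finset.measurable_sum _ fun m _ =>
      ((continuous_norm.measurable.comp (measurable_pi_apply m)).pow_const 2)
  have hFArb : ∀ v, |FAr v| ≤ ∑ m, ‖v m‖ := by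
    intro v; rw [hFAr]
    refine (Finset.abs_sum_le_sum_abs _ _).trans (Finset.sum_le_sum fun m _ => ?_)
    simpa [pow_one] using hFrb m (v m)
  have hFAib : ∀ v, |FAi v| ≤ ∑ m, ‖v m‖ := by
    intro v; rw [hFAi]
    refine (Finset.abs_sum_le_sum_abs _ _).trans (Finset.sum_le_sum fun m _ => ?_)
    simpa [pow_one] using hFib m (v m)
  have hFGnn : ∀ v, 0 ≤ FG v := by
    intro v; rw [hFG]
    exact Finset.sum_nonneg fun m _ => pow_nonneg (norm_nonneg _) 2
  -- pair integrability / integral splitting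
  have hPairInt : ∀ (p q : ℕ), p + q ≤ 4 → ∀ (u v : Fin M → ℂ → ℝ),
      (∀ m, Measurable (u m)) → (∀ m, Measurable (v m)) →
      (∀ m z, |u m z| ≤ ‖z‖ ^ p) → (∀ m z, |v m z| ≤ ‖z‖ ^ q) →
      Integrable (fun ω => (∑ m, u m (g ω m)) * (∑ n, v n (g ω n))) μ := by
    intro p q hpq u v hu hv hub hvb
    have hpt : (fun ω => (∑ m, u m (g ω m)) * (∑ n, v n (g ω n)))
        = fun ω => ∑ m, ∑ n, u m (g ω m) * v n (g ω n) := by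
      funext ω; rw [Finset.sum_mul_sum]
    rw [hpt]
    exact integrable_finset_sum _ fun m _ => integrable_finset_sum _ fun n _ =>
      hprodInt p q hpq (u m) (v n) (hu m) (hv n) (hub m) (hvb n) m n
  have hPairEq : ∀ (p q : ℕ), p + q ≤ 4 → ∀ (u v : Fin M → ℂ → ℝ),
      (∀ m, Measurable (u m)) → (∀ m, Measurable (v m)) →
      (∀ m z, |u m z| ≤ ‖z‖ ^ p) → (∀ m z, |v m z| ≤ ‖z‖ ^ q) →
      ∫ ω, (∑ m, u m (g ω m)) * (∑ n, v n (g ω n)) ∂μ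
        = ∑ m, ∑ n, ∫ ω, u m (g ω m) * v n (g ω n) ∂μ := by
    intro p q hpq u v hu hv hub hvb
    have hpt : (fun ω => (∑ m, u m (g ω m)) * (∑ n, v n (g ω n)))
        = fun ω => ∑ m, ∑ n, u m (g ω m) * v n (g ω n) := by
      funext ω; rw [Finset.sum_mul_sum]
    calc ∫ ω, (∑ m, u m (g ω m)) * (∑ n, v n (g ω n)) ∂μ
        = ∫ ω, ∑ m, ∑ n, u m (g ω m) * v n (g ω n) ∂μ := by rw [hpt]
      _ = ∑ m, ∫ ω, ∑ n, u m (g ω m) * v n (g ω n) ∂μ :=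
          integral_finset_sum _ fun m _ => integrable_finset_sum _ fun n _ =>
            hprodInt p q hpq (u m) (v n) (hu m) (hv n) (hub m) (hvb n) m n
      _ = ∑ m, ∑ n, ∫ ω, u m (g ω m) * v n (g ω n) ∂μ :=
          Finset.sum_congr rfl fun m _ => integral_finset_sum _ fun n _ =>
            hprodInt p q hpq (u m) (v n) (hu m) (hv n) (hub m) (hvb n) m n
  -- ψ-side machinery
  have hφint : ∀ φ : ℝ → ℝ, Measurable φ → ∫ ω, φ (ψ ω) ∂μ = ∫ x, φ x ∂uniformAngle := by
    intro φ hφ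
    rw [← hmap, integral_map hψm.aemeasurable hφ.aestronglyMeasurable]
  have hsplit : ∀ (φ : ℝ → ℝ) (F : (Fin M → ℂ) → ℝ), Measurable φ → Measurable F →
      ∫ ω, φ (ψ ω) * F (g ω) ∂μ = (∫ x, φ x ∂uniformAngle) * ∫ ω, F (g ω) ∂μ := by
    intro φ F hφ hF
    rw [← hφint φ hφ]
    exact (hindep.comp hφ hF).integral_fun_mul_eq_mul_integral (hφ.comp hψm).aestronglyMeasurable
      (hF.comp hgm).aestronglyMeasurable
  -- mean of G
  have hIG : ∫ ω, FG (g ω) ∂μ = M * βN := by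
    simp only [hFG]
    rw [integral_finset_sum _ fun m _ => hIpow m 2 (by norm_num)]
    simp only [hEg2]
    simp [Finset.sum_const, Finset.card_univ, nsmul_eq_mul]
  -- second moment pieces
  have hdiagRI : ∀ m, ∫ ω, (Fr m (g ω m) * Fr m (g ω m) + Fi m (g ω m) * Fi m (g ω m)) ∂μ
      = βN := by
    intro m
    have hpt : (fun ω => Fr m (g ω m) * Fr m (g ω m) + Fi m (g ω m) * Fi m (g ω m))
        = fun ω => ‖g ω m‖ ^ 2 := by
      funext ω
      rw [hFr, hFi]
      change Complex.normSq (a m * (starRingEnd ℂ) (g ω m)) = _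
      rw [Complex.normSq_mul, Complex.normSq_conj, ← Complex.sq_norm, ← Complex.sq_norm, hA m]
      norm_num
    rw [hpt, hEg2 m]
  have hAA : (∫ ω, FAr (g ω) * FAr (g ω) ∂μ) + (∫ ω, FAi (g ω) * FAi (g ω) ∂μ)
      = M * βN := by
    simp only [hFAr, hFAi]
    rw [hPairEq 1 1 (by norm_num) Fr Fr hFrm hFrm hFrb hFrb,
      hPairEq 1 1 (by norm_num) Fi Fi hFim hFim hFib hFib]
    have e1 : ∀ m, (∑ n, ∫ ω, Fr m (g ω m) * Fr n (g ω n) ∂μ)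
        = ∫ ω, Fr m (g ω m) * Fr m (g ω m) ∂μ := by
      intro m
      refine Finset.sum_eq_single m (fun n _ hnm => ?_) (fun hm => absurd (Finset.mem_univ m) hm)
      rw [hprodVal 1 1 (by norm_num) (by norm_num) (Fr m) (Fr n) (hFrm m) (hFrm n)
        (hFrb m) (hFrb n) m n (Ne.symm hnm), hFrmean m, zero_mul]
    have e2 : ∀ m, (∑ n, ∫ ω, Fi m (g ω m) * Fi n (g ω n) ∂μ)
        = ∫ ω, Fi m (g ω m) * Fi m (g ω m) ∂μ := by
      intro m
      refine Finset.sum_eq_single m (fun n _ hnm => ?_) (fun hm => absurd (Finset.mem_univ m) hm)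
      rw [hprodVal 1 1 (by norm_num) (by norm_num) (Fi m) (Fi n) (hFim m) (hFim n)
        (hFib m) (hFib n) m n (Ne.symm hnm), hFimean m, zero_mul]
    simp only [e1, e2]
    rw [← Finset.sum_add_distrib]
    have e3 : ∀ m, (∫ ω, Fr m (g ω m) * Fr m (g ω m) ∂μ)
        + (∫ ω, Fi m (g ω m) * Fi m (g ω m) ∂μ) = βN := by
      intro m
      rw [← integral_add
        (hprodInt 1 1 (by norm_num) (Fr m) (Fr m) (hFrm m) (hFrm m) (hFrb m) (hFrb m) m m)
        (hprodInt 1 1 (by norm_num) (Fi m) (Fi m) (hFim m) (hFim m) (hFib m) (hFib m) m m)]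
      exact hdiagRI m
    simp only [e3]
    simp [Finset.sum_const, Finset.card_univ, nsmul_eq_mul]
  -- fourth moment of G
  have habs2b : ∀ (m : Fin M) (z : ℂ), |‖z‖ ^ 2| ≤ ‖z‖ ^ 2 :=
    fun _ z => habsb 2 z
  have habs2m : ∀ m : Fin M, Measurable (fun z : ℂ => ‖z‖ ^ 2) :=
    fun _ => continuous_norm.measurable.pow_const 2
  have hIG2 : ∫ ω, FG (g ω) * FG (g ω) ∂μ = (M:ℝ)^2 * βN^2 + M * βN^2 := by
    simp only [hFG]
    rw [hPairEq 2 2 (by norm_num) (fun _ z => ‖z‖ ^ 2) (fun _ z => ‖z‖ ^ 2)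
      habs2m habs2m habs2b habs2b]
    have hterm : ∀ m n : Fin M, ∫ ω, ‖g ω m‖ ^ 2 * ‖g ω n‖ ^ 2 ∂μ
        = βN ^ 2 + if m = n then βN ^ 2 else 0 := by
      intro m n
      by_cases hmn : m = n
      · subst hmn
        have hpt : (fun ω => ‖g ω m‖ ^ 2 * ‖g ω m‖ ^ 2)
            = fun ω => ‖g ω m‖ ^ 4 := by
          funext ω; ring
        rw [hpt, hEg4 m, if_pos rfl]; ring
      · rw [hprodVal 2 2 (by norm_num) (by norm_num) _ _ (habs2m m) (habs2m n)
          (habs2b m) (habs2b n) m n hmn, hEg2 m, hEg2 n, if_neg hmn]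
        ring
    simp only [hterm]
    simp [Finset.sum_add_distrib, Finset.sum_ite_eq, Finset.sum_const, Finset.card_univ,
      nsmul_eq_mul]
    ring
  -- the LoS coefficient
  set c : ℝ := ξ * Real.sqrt βL with hc
  have hcsq : c ^ 2 = ξ * βL := by
    rcases hξ with h0 | h0 <;> simp [hc, h0, mul_pow, Real.sq_sqrt hβL]
  -- pointwise coordinate identity
  have hkey : ∀ ω m, ‖h ω m‖ ^ 2
      = c^2 + 2*c*(Real.cos (ψ ω) * Fr m (g ω m) + Real.sin (ψ ω) * Fi m (g ω m))
        + ‖g ω m‖ ^ 2 := by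
    intro ω m
    rw [hdec ω m]
    have hxc : (ξ:ℂ) * (Real.sqrt βL : ℂ) = ((c:ℝ):ℂ) := by rw [hc]; push_cast; ring
    rw [hxc]
    set E := Complex.exp (-(Complex.I * (ψ ω : ℂ))) with hE
    have hEabs : ‖E‖ = 1 := by
      rw [hE, Complex.norm_exp]; simp
    have hEre : E.re = Real.cos (ψ ω) := by
      rw [hE, exp_neg_I_theta]
      simp only [Complex.sub_re, Complex.mul_re, Complex.ofReal_re, Complex.ofReal_im,
        Complex.I_re, Complex.I_im]
      ring
    have hEim : E.im = -Real.sin (ψ ω) := by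
      rw [hE, exp_neg_I_theta]
      simp only [Complex.sub_im, Complex.mul_im, Complex.ofReal_re, Complex.ofReal_im,
        Complex.I_re, Complex.I_im]
      ring
    rw [Complex.sq_norm, Complex.normSq_add]
    have h1 : Complex.normSq ((c:ℂ) * E * a m) = c ^ 2 := by
      rw [Complex.normSq_mul, Complex.normSq_mul, Complex.normSq_ofReal,
        Complex.normSq_eq_norm_sq, Complex.normSq_eq_norm_sq, hEabs, hA m]
      ring
    have h2 : (((c:ℂ) * E * a m) * (starRingEnd ℂ) (g ω m)).re
        = c * (Real.cos (ψ ω) * Fr m (g ω m) + Real.sin (ψ ω) * Fi m (g ω m)) := by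
      have e : ((c:ℂ) * E * a m) * (starRingEnd ℂ) (g ω m)
          = (c:ℂ) * (E * (a m * (starRingEnd ℂ) (g ω m))) := by ring
      rw [e, Complex.re_ofReal_mul, Complex.mul_re, hEre, hEim, hFr, hFi]
      ring
    rw [h1, h2, Complex.normSq_eq_norm_sq]
    ring
  have hS : ∀ ω, (∑ m, ‖h ω m‖ ^ 2)
      = (M:ℝ) * c^2 + 2*c*(Real.cos (ψ ω) * FAr (g ω) + Real.sin (ψ ω) * FAi (g ω))
        + FG (g ω) := by
    intro ω
    simp only [hFAr, hFAi, hFG]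
    rw [Finset.sum_congr rfl fun m _ => hkey ω m]
    rw [Finset.sum_add_distrib, Finset.sum_add_distrib, Finset.sum_const,
      Finset.card_univ, Fintype.card_fin, nsmul_eq_mul, ← Finset.mul_sum,
      Finset.sum_add_distrib, ← Finset.mul_sum, ← Finset.mul_sum]
  -- expansion of the square
  have hexp : (fun ω => (∑ m, ‖h ω m‖ ^ 2) ^ 2)
      = fun ω => ((M:ℝ) * c^2)^2
        + (4 * ((M:ℝ) * c^2) * c * (Real.cos (ψ ω) * FAr (g ω))
        + (4 * ((M:ℝ) * c^2) * c * (Real.sin (ψ ω) * FAi (g ω))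
        + (2 * ((M:ℝ) * c^2) * FG (g ω)
        + (4 * c^2 * (Real.cos (ψ ω) ^ 2 * (FAr (g ω) * FAr (g ω)))
        + (4 * c^2 * (Real.sin (ψ ω) ^ 2 * (FAi (g ω) * FAi (g ω)))
        + (8 * c^2 * (Real.sin (ψ ω) * Real.cos (ψ ω) * (FAr (g ω) * FAi (g ω)))
        + (4 * c * (Real.cos (ψ ω) * (FAr (g ω) * FG (g ω)))
        + (4 * c * (Real.sin (ψ ω) * (FAi (g ω) * FG (g ω)))
        + FG (g ω) * FG (g ω))))))))) := by
    funext ω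
    rw [hS ω]
    ring
  -- integrability infrastructure for the mixed terms
  have habs1b : ∀ (m : Fin M) (z : ℂ), |‖z‖| ≤ ‖z‖ ^ 1 := fun _ z => by
    rw [pow_one]; exact le_of_eq (abs_of_nonneg (norm_nonneg _))
  have habs1m : ∀ m : Fin M, Measurable (fun z : ℂ => ‖z‖) :=
    fun _ => continuous_norm.measurable
  have hB1Int : Integrable (fun ω => ∑ m, ‖g ω m‖) μ :=
    integrable_finset_sum _ fun m _ => by simpa [pow_one] using hIpow m 1 (by norm_num)
  have hB11Int : Integrable
      (fun ω => (∑ m, ‖g ω m‖) * (∑ n, ‖g ω n‖)) μ :=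
    hPairInt 1 1 (by norm_num) _ _ habs1m habs1m habs1b habs1b
  have hB12Int : Integrable
      (fun ω => (∑ m, ‖g ω m‖) * (∑ n, ‖g ω n‖ ^ 2)) μ :=
    hPairInt 1 2 (by norm_num) _ _ habs1m habs2m habs1b habs2b
  have hFGb : ∀ v, |FG v| ≤ ∑ m, ‖v m‖ ^ 2 := by
    intro v
    rw [abs_of_nonneg (hFGnn v)]
  have hbmul : ∀ (φ : ℝ → ℝ) (F : (Fin M → ℂ) → ℝ) (B : Ω → ℝ), Measurable φ →
      Measurable F → (∀ x, |φ x| ≤ 1) → Integrable B μ → (∀ ω, |F (g ω)| ≤ B ω) →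
      Integrable (fun ω => φ (ψ ω) * F (g ω)) μ := by
    intro φ F B hφ hF hφb hB hFb
    refine Integrable.mono' hB (((hφ.comp hψm).mul (hF.comp hgm)).aestronglyMeasurable)
      (ae_of_all _ fun ω => ?_)
    rw [Real.norm_eq_abs, abs_mul]
    calc |φ (ψ ω)| * |F (g ω)| ≤ 1 * |F (g ω)| :=
          mul_le_mul_of_nonneg_right (hφb _) (abs_nonneg _)
      _ = |F (g ω)| := one_mul _
      _ ≤ B ω := hFb ω
  have hcos1 : ∀ x : ℝ, |Real.cos x| ≤ 1 := fun x => Real.abs_cos_le_one x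
  have hsin1 : ∀ x : ℝ, |Real.sin x| ≤ 1 := fun x => Real.abs_sin_le_one x
  have hcossq1 : ∀ x : ℝ, |Real.cos x ^ 2| ≤ 1 := fun x => by
    rw [abs_of_nonneg (sq_nonneg _)]; exact Real.cos_sq_le_one x
  have hsinsq1 : ∀ x : ℝ, |Real.sin x ^ 2| ≤ 1 := fun x => by
    rw [abs_of_nonneg (sq_nonneg _)]; exact Real.sin_sq_le_one x
  have hsincos1 : ∀ x : ℝ, |Real.sin x * Real.cos x| ≤ 1 := fun x => by
    rw [abs_mul]
    exact mul_le_one₀ (Real.abs_sin_le_one x) (abs_nonneg _) (Real.abs_cos_le_one x)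
  have hbArAr : ∀ ω, |FAr (g ω) * FAr (g ω)|
      ≤ (∑ m, ‖g ω m‖) * (∑ n, ‖g ω n‖) := fun ω => by
    rw [abs_mul]
    exact mul_le_mul (hFArb _) (hFArb _) (abs_nonneg _)
      (Finset.sum_nonneg fun m _ => norm_nonneg _)
  have hbAiAi : ∀ ω, |FAi (g ω) * FAi (g ω)|
      ≤ (∑ m, ‖g ω m‖) * (∑ n, ‖g ω n‖) := fun ω => by
    rw [abs_mul]
    exact mul_le_mul (hFAib _) (hFAib _) (abs_nonneg _)
      (Finset.sum_nonneg fun m _ => norm_nonneg _)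
  have hbArAi : ∀ ω, |FAr (g ω) * FAi (g ω)|
      ≤ (∑ m, ‖g ω m‖) * (∑ n, ‖g ω n‖) := fun ω => by
    rw [abs_mul]
    exact mul_le_mul (hFArb _) (hFAib _) (abs_nonneg _)
      (Finset.sum_nonneg fun m _ => norm_nonneg _)
  have hbArFG : ∀ ω, |FAr (g ω) * FG (g ω)|
      ≤ (∑ m, ‖g ω m‖) * (∑ n, ‖g ω n‖ ^ 2) := fun ω => by
    rw [abs_mul]
    exact mul_le_mul (hFArb _) (hFGb _) (abs_nonneg _)
      (Finset.sum_nonneg fun m _ => norm_nonneg _)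
  have hbAiFG : ∀ ω, |FAi (g ω) * FG (g ω)|
      ≤ (∑ m, ‖g ω m‖) * (∑ n, ‖g ω n‖ ^ 2) := fun ω => by
    rw [abs_mul]
    exact mul_le_mul (hFAib _) (hFGb _) (abs_nonneg _)
      (Finset.sum_nonneg fun m _ => norm_nonneg _)
  -- the ten integrable pieces
  have i2 : Integrable (fun ω => Real.cos (ψ ω) * FAr (g ω)) μ :=
    hbmul Real.cos FAr _ Real.measurable_cos hFArm hcos1 hB1Int fun ω =>
      (hFArb (g ω))
  have i3 : Integrable (fun ω => Real.sin (ψ ω) * FAi (g ω)) μ :=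
    hbmul Real.sin FAi _ Real.measurable_sin hFAim hsin1 hB1Int fun ω =>
      (hFAib (g ω))
  have i4 : Integrable (fun ω => FG (g ω)) μ := by
    simp only [hFG]
    exact integrable_finset_sum _ fun m _ => hIpow m 2 (by norm_num)
  have i5 : Integrable (fun ω => Real.cos (ψ ω) ^ 2 * (FAr (g ω) * FAr (g ω))) μ :=
    hbmul (fun x => Real.cos x ^ 2) (fun v => FAr v * FAr v) _
      (Real.measurable_cos.pow_const 2) (hFArm.mul hFArm) hcossq1 hB11Int hbArAr
  have i6 : Integrable (fun ω => Real.sin (ψ ω) ^ 2 * (FAi (g ω) * FAi (g ω))) μ :=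
    hbmul (fun x => Real.sin x ^ 2) (fun v => FAi v * FAi v) _
      (Real.measurable_sin.pow_const 2) (hFAim.mul hFAim) hsinsq1 hB11Int hbAiAi
  have i7 : Integrable (fun ω => Real.sin (ψ ω) * Real.cos (ψ ω) * (FAr (g ω) * FAi (g ω))) μ :=
    hbmul (fun x => Real.sin x * Real.cos x) (fun v => FAr v * FAi v) _
      (Real.measurable_sin.mul Real.measurable_cos) (hFArm.mul hFAim) hsincos1 hB11Int hbArAi
  have i8 : Integrable (fun ω => Real.cos (ψ ω) * (FAr (g ω) * FG (g ω))) μ :=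
    hbmul Real.cos (fun v => FAr v * FG v) _
      Real.measurable_cos (hFArm.mul hFGm) hcos1 hB12Int hbArFG
  have i9 : Integrable (fun ω => Real.sin (ψ ω) * (FAi (g ω) * FG (g ω))) μ :=
    hbmul Real.sin (fun v => FAi v * FG v) _
      Real.measurable_sin (hFAim.mul hFGm) hsin1 hB12Int hbAiFG
  have i10 : Integrable (fun ω => FG (g ω) * FG (g ω)) μ := by
    simp only [hFG]
    exact hPairInt 2 2 (by norm_num) _ _ habs2m habs2m habs2b habs2b
  -- integral values of the mixed terms
  have v2 : ∫ ω, Real.cos (ψ ω) * FAr (g ω) ∂μ = 0 := by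
    rw [hsplit Real.cos FAr Real.measurable_cos hFArm, uniformAngle_cos, zero_mul]
  have v3 : ∫ ω, Real.sin (ψ ω) * FAi (g ω) ∂μ = 0 := by
    rw [hsplit Real.sin FAi Real.measurable_sin hFAim, uniformAngle_sin, zero_mul]
  have v5 : ∫ ω, Real.cos (ψ ω) ^ 2 * (FAr (g ω) * FAr (g ω)) ∂μ
      = 1 / 2 * ∫ ω, FAr (g ω) * FAr (g ω) ∂μ := by
    have := hsplit (fun x => Real.cos x ^ 2) (fun v => FAr v * FAr v)
      (Real.measurable_cos.pow_const 2) (hFArm.mul hFArm)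
    rw [this, uniformAngle_cos_sq]
  have v6 : ∫ ω, Real.sin (ψ ω) ^ 2 * (FAi (g ω) * FAi (g ω)) ∂μ
      = 1 / 2 * ∫ ω, FAi (g ω) * FAi (g ω) ∂μ := by
    have := hsplit (fun x => Real.sin x ^ 2) (fun v => FAi v * FAi v)
      (Real.measurable_sin.pow_const 2) (hFAim.mul hFAim)
    rw [this, uniformAngle_sin_sq]
  have v7 : ∫ ω, Real.sin (ψ ω) * Real.cos (ψ ω) * (FAr (g ω) * FAi (g ω)) ∂μ = 0 := by
    have := hsplit (fun x => Real.sin x * Real.cos x) (fun v => FAr v * FAi v)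
      (Real.measurable_sin.mul Real.measurable_cos) (hFArm.mul hFAim)
    rw [this, uniformAngle_sin_cos, zero_mul]
  have v8 : ∫ ω, Real.cos (ψ ω) * (FAr (g ω) * FG (g ω)) ∂μ = 0 := by
    have := hsplit Real.cos (fun v => FAr v * FG v) Real.measurable_cos (hFArm.mul hFGm)
    rw [this, uniformAngle_cos, zero_mul]
  have v9 : ∫ ω, Real.sin (ψ ω) * (FAi (g ω) * FG (g ω)) ∂μ = 0 := by
    have := hsplit Real.sin (fun v => FAi v * FG v) Real.measurable_sin (hFAim.mul hFGm)
    rw [this, uniformAngle_sin, zero_mul]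
  -- assembly
  have j2 : Integrable (fun ω => 4 * ((M:ℝ) * c^2) * c * (Real.cos (ψ ω) * FAr (g ω))) μ :=
    i2.const_mul _
  have j3 : Integrable (fun ω => 4 * ((M:ℝ) * c^2) * c * (Real.sin (ψ ω) * FAi (g ω))) μ :=
    i3.const_mul _
  have j4 : Integrable (fun ω => 2 * ((M:ℝ) * c^2) * FG (g ω)) μ := i4.const_mul _
  have j5 : Integrable
      (fun ω => 4 * c^2 * (Real.cos (ψ ω) ^ 2 * (FAr (g ω) * FAr (g ω)))) μ :=
    i5.const_mul _
  have j6 : Integrable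
      (fun ω => 4 * c^2 * (Real.sin (ψ ω) ^ 2 * (FAi (g ω) * FAi (g ω)))) μ :=
    i6.const_mul _
  have j7 : Integrable
      (fun ω => 8 * c^2 * (Real.sin (ψ ω) * Real.cos (ψ ω) * (FAr (g ω) * FAi (g ω)))) μ :=
    i7.const_mul _
  have j8 : Integrable (fun ω => 4 * c * (Real.cos (ψ ω) * (FAr (g ω) * FG (g ω)))) μ :=
    i8.const_mul _
  have j9 : Integrable (fun ω => 4 * c * (Real.sin (ψ ω) * (FAi (g ω) * FG (g ω)))) μ :=
    i9.const_mul _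
  have S1 : ∫ ω, (((M:ℝ) * c^2)^2 + (4 * ((M:ℝ) * c^2) * c * (Real.cos (ψ ω) * FAr (g ω)) + (4 * ((M:ℝ) * c^2) * c * (Real.sin (ψ ω) * FAi (g ω)) + (2 * ((M:ℝ) * c^2) * FG (g ω) + (4 * c^2 * (Real.cos (ψ ω) ^ 2 * (FAr (g ω) * FAr (g ω))) + (4 * c^2 * (Real.sin (ψ ω) ^ 2 * (FAi (g ω) * FAi (g ω))) + (8 * c^2 * (Real.sin (ψ ω) * Real.cos (ψ ω) * (FAr (g ω) * FAi (g ω))) + (4 * c * (Real.cos (ψ ω) * (FAr (g ω) * FG (g ω))) + (4 * c * (Real.sin (ψ ω) * (FAi (g ω) * FG (g ω))) + (FG (g ω) * FG (g ω))))))))))) ∂μ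
      = (∫ ω, ((M:ℝ) * c^2)^2 ∂μ) + ∫ ω, (4 * ((M:ℝ) * c^2) * c * (Real.cos (ψ ω) * FAr (g ω)) + (4 * ((M:ℝ) * c^2) * c * (Real.sin (ψ ω) * FAi (g ω)) + (2 * ((M:ℝ) * c^2) * FG (g ω) + (4 * c^2 * (Real.cos (ψ ω) ^ 2 * (FAr (g ω) * FAr (g ω))) + (4 * c^2 * (Real.sin (ψ ω) ^ 2 * (FAi (g ω) * FAi (g ω))) + (8 * c^2 * (Real.sin (ψ ω) * Real.cos (ψ ω) * (FAr (g ω) * FAi (g ω))) + (4 * c * (Real.cos (ψ ω) * (FAr (g ω) * FG (g ω))) + (4 * c * (Real.sin (ψ ω) * (FAi (g ω) * FG (g ω))) + (FG (g ω) * FG (g ω)))))))))) ∂μ :=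
    integral_add (integrable_const _) (j2.add (j3.add (j4.add (j5.add (j6.add (j7.add (j8.add (j9.add i10))))))))
  have S2 : ∫ ω, (4 * ((M:ℝ) * c^2) * c * (Real.cos (ψ ω) * FAr (g ω)) + (4 * ((M:ℝ) * c^2) * c * (Real.sin (ψ ω) * FAi (g ω)) + (2 * ((M:ℝ) * c^2) * FG (g ω) + (4 * c^2 * (Real.cos (ψ ω) ^ 2 * (FAr (g ω) * FAr (g ω))) + (4 * c^2 * (Real.sin (ψ ω) ^ 2 * (FAi (g ω) * FAi (g ω))) + (8 * c^2 * (Real.sin (ψ ω) * Real.cos (ψ ω) * (FAr (g ω) * FAi (g ω))) + (4 * c * (Real.cos (ψ ω) * (FAr (g ω) * FG (g ω))) + (4 * c * (Real.sin (ψ ω) * (FAi (g ω) * FG (g ω))) + (FG (g ω) * FG (g ω)))))))))) ∂μ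
      = (∫ ω, 4 * ((M:ℝ) * c^2) * c * (Real.cos (ψ ω) * FAr (g ω)) ∂μ) + ∫ ω, (4 * ((M:ℝ) * c^2) * c * (Real.sin (ψ ω) * FAi (g ω)) + (2 * ((M:ℝ) * c^2) * FG (g ω) + (4 * c^2 * (Real.cos (ψ ω) ^ 2 * (FAr (g ω) * FAr (g ω))) + (4 * c^2 * (Real.sin (ψ ω) ^ 2 * (FAi (g ω) * FAi (g ω))) + (8 * c^2 * (Real.sin (ψ ω) * Real.cos (ψ ω) * (FAr (g ω) * FAi (g ω))) + (4 * c * (Real.cos (ψ ω) * (FAr (g ω) * FG (g ω))) + (4 * c * (Real.sin (ψ ω) * (FAi (g ω) * FG (g ω))) + (FG (g ω) * FG (g ω))))))))) ∂μ :=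
    integral_add j2 (j3.add (j4.add (j5.add (j6.add (j7.add (j8.add (j9.add i10)))))))
  have S3 : ∫ ω, (4 * ((M:ℝ) * c^2) * c * (Real.sin (ψ ω) * FAi (g ω)) + (2 * ((M:ℝ) * c^2) * FG (g ω) + (4 * c^2 * (Real.cos (ψ ω) ^ 2 * (FAr (g ω) * FAr (g ω))) + (4 * c^2 * (Real.sin (ψ ω) ^ 2 * (FAi (g ω) * FAi (g ω))) + (8 * c^2 * (Real.sin (ψ ω) * Real.cos (ψ ω) * (FAr (g ω) * FAi (g ω))) + (4 * c * (Real.cos (ψ ω) * (FAr (g ω) * FG (g ω))) + (4 * c * (Real.sin (ψ ω) * (FAi (g ω) * FG (g ω))) + (FG (g ω) * FG (g ω))))))))) ∂μ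
      = (∫ ω, 4 * ((M:ℝ) * c^2) * c * (Real.sin (ψ ω) * FAi (g ω)) ∂μ) + ∫ ω, (2 * ((M:ℝ) * c^2) * FG (g ω) + (4 * c^2 * (Real.cos (ψ ω) ^ 2 * (FAr (g ω) * FAr (g ω))) + (4 * c^2 * (Real.sin (ψ ω) ^ 2 * (FAi (g ω) * FAi (g ω))) + (8 * c^2 * (Real.sin (ψ ω) * Real.cos (ψ ω) * (FAr (g ω) * FAi (g ω))) + (4 * c * (Real.cos (ψ ω) * (FAr (g ω) * FG (g ω))) + (4 * c * (Real.sin (ψ ω) * (FAi (g ω) * FG (g ω))) + (FG (g ω) * FG (g ω)))))))) ∂μ :=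
    integral_add j3 (j4.add (j5.add (j6.add (j7.add (j8.add (j9.add i10))))))
  have S4 : ∫ ω, (2 * ((M:ℝ) * c^2) * FG (g ω) + (4 * c^2 * (Real.cos (ψ ω) ^ 2 * (FAr (g ω) * FAr (g ω))) + (4 * c^2 * (Real.sin (ψ ω) ^ 2 * (FAi (g ω) * FAi (g ω))) + (8 * c^2 * (Real.sin (ψ ω) * Real.cos (ψ ω) * (FAr (g ω) * FAi (g ω))) + (4 * c * (Real.cos (ψ ω) * (FAr (g ω) * FG (g ω))) + (4 * c * (Real.sin (ψ ω) * (FAi (g ω) * FG (g ω))) + (FG (g ω) * FG (g ω)))))))) ∂μ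
      = (∫ ω, 2 * ((M:ℝ) * c^2) * FG (g ω) ∂μ) + ∫ ω, (4 * c^2 * (Real.cos (ψ ω) ^ 2 * (FAr (g ω) * FAr (g ω))) + (4 * c^2 * (Real.sin (ψ ω) ^ 2 * (FAi (g ω) * FAi (g ω))) + (8 * c^2 * (Real.sin (ψ ω) * Real.cos (ψ ω) * (FAr (g ω) * FAi (g ω))) + (4 * c * (Real.cos (ψ ω) * (FAr (g ω) * FG (g ω))) + (4 * c * (Real.sin (ψ ω) * (FAi (g ω) * FG (g ω))) + (FG (g ω) * FG (g ω))))))) ∂μ :=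
    integral_add j4 (j5.add (j6.add (j7.add (j8.add (j9.add i10)))))
  have S5 : ∫ ω, (4 * c^2 * (Real.cos (ψ ω) ^ 2 * (FAr (g ω) * FAr (g ω))) + (4 * c^2 * (Real.sin (ψ ω) ^ 2 * (FAi (g ω) * FAi (g ω))) + (8 * c^2 * (Real.sin (ψ ω) * Real.cos (ψ ω) * (FAr (g ω) * FAi (g ω))) + (4 * c * (Real.cos (ψ ω) * (FAr (g ω) * FG (g ω))) + (4 * c * (Real.sin (ψ ω) * (FAi (g ω) * FG (g ω))) + (FG (g ω) * FG (g ω))))))) ∂μ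
      = (∫ ω, 4 * c^2 * (Real.cos (ψ ω) ^ 2 * (FAr (g ω) * FAr (g ω))) ∂μ) + ∫ ω, (4 * c^2 * (Real.sin (ψ ω) ^ 2 * (FAi (g ω) * FAi (g ω))) + (8 * c^2 * (Real.sin (ψ ω) * Real.cos (ψ ω) * (FAr (g ω) * FAi (g ω))) + (4 * c * (Real.cos (ψ ω) * (FAr (g ω) * FG (g ω))) + (4 * c * (Real.sin (ψ ω) * (FAi (g ω) * FG (g ω))) + (FG (g ω) * FG (g ω)))))) ∂μ :=
    integral_add j5 (j6.add (j7.add (j8.add (j9.add i10))))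
  have S6 : ∫ ω, (4 * c^2 * (Real.sin (ψ ω) ^ 2 * (FAi (g ω) * FAi (g ω))) + (8 * c^2 * (Real.sin (ψ ω) * Real.cos (ψ ω) * (FAr (g ω) * FAi (g ω))) + (4 * c * (Real.cos (ψ ω) * (FAr (g ω) * FG (g ω))) + (4 * c * (Real.sin (ψ ω) * (FAi (g ω) * FG (g ω))) + (FG (g ω) * FG (g ω)))))) ∂μ
      = (∫ ω, 4 * c^2 * (Real.sin (ψ ω) ^ 2 * (FAi (g ω) * FAi (g ω))) ∂μ) + ∫ ω, (8 * c^2 * (Real.sin (ψ ω) * Real.cos (ψ ω) * (FAr (g ω) * FAi (g ω))) + (4 * c * (Real.cos (ψ ω) * (FAr (g ω) * FG (g ω))) + (4 * c * (Real.sin (ψ ω) * (FAi (g ω) * FG (g ω))) + (FG (g ω) * FG (g ω))))) ∂μ :=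
    integral_add j6 (j7.add (j8.add (j9.add i10)))
  have S7 : ∫ ω, (8 * c^2 * (Real.sin (ψ ω) * Real.cos (ψ ω) * (FAr (g ω) * FAi (g ω))) + (4 * c * (Real.cos (ψ ω) * (FAr (g ω) * FG (g ω))) + (4 * c * (Real.sin (ψ ω) * (FAi (g ω) * FG (g ω))) + (FG (g ω) * FG (g ω))))) ∂μ
      = (∫ ω, 8 * c^2 * (Real.sin (ψ ω) * Real.cos (ψ ω) * (FAr (g ω) * FAi (g ω))) ∂μ) + ∫ ω, (4 * c * (Real.cos (ψ ω) * (FAr (g ω) * FG (g ω))) + (4 * c * (Real.sin (ψ ω) * (FAi (g ω) * FG (g ω))) + (FG (g ω) * FG (g ω)))) ∂μ :=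
    integral_add j7 (j8.add (j9.add i10))
  have S8 : ∫ ω, (4 * c * (Real.cos (ψ ω) * (FAr (g ω) * FG (g ω))) + (4 * c * (Real.sin (ψ ω) * (FAi (g ω) * FG (g ω))) + (FG (g ω) * FG (g ω)))) ∂μ
      = (∫ ω, 4 * c * (Real.cos (ψ ω) * (FAr (g ω) * FG (g ω))) ∂μ) + ∫ ω, (4 * c * (Real.sin (ψ ω) * (FAi (g ω) * FG (g ω))) + (FG (g ω) * FG (g ω))) ∂μ :=
    integral_add j8 (j9.add i10)
  have S9 : ∫ ω, (4 * c * (Real.sin (ψ ω) * (FAi (g ω) * FG (g ω))) + (FG (g ω) * FG (g ω))) ∂μ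
      = (∫ ω, 4 * c * (Real.sin (ψ ω) * (FAi (g ω) * FG (g ω))) ∂μ) + ∫ ω, (FG (g ω) * FG (g ω)) ∂μ :=
    integral_add j9 i10
  rw [hexp, S1, S2, S3, S4, S5, S6, S7, S8, S9]
  rw [integral_const]
  simp only [measure_univ, ENNReal.toReal_one, probReal_univ, smul_eq_mul, one_mul]
  rw [integral_const_mul, integral_const_mul, integral_const_mul, integral_const_mul,
    integral_const_mul, integral_const_mul, integral_const_mul, integral_const_mul]
  rw [v2, v3, hIG, v5, v6, v7, v8, v9, hIG2]
  rw [hcsq]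
  linear_combination ((2:ℝ) * (ξ * βL)) * hAA
end
end

section
/- Let h ∈ ℂ^M be a Rician channel block with parameters (ξ, β_L, β_N, a) and let h′ ∈ ℂ^M be a Rician channel block with parameters (ξ′, β_L′, β_N′, a′), with h and h′ independent. Then E[|hᴴ h′|²] = ξ·ξ′·β_L·β_L′·|aᴴ a′|² + M·β_N·β_N′ + M·ξ·β_L·β_N′ + M·ξ′·β_N·β_L′. -/
open MeasureTheory ProbabilityTheory Finset

noncomputable section

section helpers
variable {Ω : Type*} [MeasurableSpace Ω] {μ : Measure Ω}

lemma indep_integral_mul_complex {X Y : Ω → ℂ} (hXY : IndepFun X Y μ)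
    (hX : Integrable X μ) (hY : Integrable Y μ) :
    ∫ ω, X ω * Y ω ∂μ = (∫ ω, X ω ∂μ) * ∫ ω, Y ω ∂μ := by
  have hre : Measurable (Complex.re) := Complex.measurable_re
  have him : Measurable (Complex.im) := Complex.measurable_im
  have iXr : Integrable (fun ω => (X ω).re) μ := by simpa using hX.re
  have iXi : Integrable (fun ω => (X ω).im) μ := by simpa using hX.im
  have iYr : Integrable (fun ω => (Y ω).re) μ := by simpa using hY.re
  have iYi : Integrable (fun ω => (Y ω).im) μ := by simpa using hY.im
  have irr : IndepFun (fun ω => (X ω).re) (fun ω => (Y ω).re) μ := hXY.comp hre hre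
  have iri : IndepFun (fun ω => (X ω).re) (fun ω => (Y ω).im) μ := hXY.comp hre him
  have iir : IndepFun (fun ω => (X ω).im) (fun ω => (Y ω).re) μ := hXY.comp him hre
  have iii : IndepFun (fun ω => (X ω).im) (fun ω => (Y ω).im) μ := hXY.comp him him
  have hXYint : Integrable (fun ω => X ω * Y ω) μ := by
    simpa [Pi.mul_def] using hXY.integrable_mul hX hY
  have e1 : ∫ ω, (X ω).re * (Y ω).re ∂μ = (∫ ω, (X ω).re ∂μ) * ∫ ω, (Y ω).re ∂μ := by
    simpa [Pi.mul_def] using irr.integral_mul_eq_mul_integral iXr.aestronglyMeasurable iYr.aestronglyMeasurable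
  have e2 : ∫ ω, (X ω).re * (Y ω).im ∂μ = (∫ ω, (X ω).re ∂μ) * ∫ ω, (Y ω).im ∂μ := by
    simpa [Pi.mul_def] using iri.integral_mul_eq_mul_integral iXr.aestronglyMeasurable iYi.aestronglyMeasurable
  have e3 : ∫ ω, (X ω).im * (Y ω).re ∂μ = (∫ ω, (X ω).im ∂μ) * ∫ ω, (Y ω).re ∂μ := by
    simpa [Pi.mul_def] using iir.integral_mul_eq_mul_integral iXi.aestronglyMeasurable iYr.aestronglyMeasurable
  have e4 : ∫ ω, (X ω).im * (Y ω).im ∂μ = (∫ ω, (X ω).im ∂μ) * ∫ ω, (Y ω).im ∂μ := by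
    simpa [Pi.mul_def] using iii.integral_mul_eq_mul_integral iXi.aestronglyMeasurable iYi.aestronglyMeasurable
  have hXr : (∫ ω, X ω ∂μ).re = ∫ ω, (X ω).re ∂μ := by
    simpa using (integral_re hX).symm
  have hXi : (∫ ω, X ω ∂μ).im = ∫ ω, (X ω).im ∂μ := by
    simpa using (integral_im hX).symm
  have hYr : (∫ ω, Y ω ∂μ).re = ∫ ω, (Y ω).re ∂μ := by
    simpa using (integral_re hY).symm
  have hYi : (∫ ω, Y ω ∂μ).im = ∫ ω, (Y ω).im ∂μ := by
    simpa using (integral_im hY).symm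
  apply Complex.ext
  · have hrw : (∫ ω, X ω * Y ω ∂μ).re = ∫ ω, (X ω * Y ω).re ∂μ := by
      simpa using (integral_re hXYint).symm
    rw [hrw]
    simp only [Complex.mul_re]
    rw [integral_sub (by simpa [Pi.mul_def] using irr.integrable_mul iXr iYr)
      (by simpa [Pi.mul_def] using iii.integrable_mul iXi iYi), e1, e4, hXr, hXi, hYr, hYi]
  · have hrw : (∫ ω, X ω * Y ω ∂μ).im = ∫ ω, (X ω * Y ω).im ∂μ := by
      simpa using (integral_im hXYint).symm
    rw [hrw]
    simp only [Complex.mul_im]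
    rw [integral_add (by simpa [Pi.mul_def] using iri.integrable_mul iXr iYi)
      (by simpa [Pi.mul_def] using iir.integrable_mul iXi iYr), e2, e3, hXr, hXi, hYr, hYi]

lemma rician_pair_integral [IsProbabilityMeasure μ] {M : ℕ} {ξ βL βN : ℝ}
    {a : Fin M → ℂ} {h : Ω → Fin M → ℂ} (hR : IsRicianBlock μ ξ βL βN a h) (m n : Fin M) :
    Integrable (fun ω => (starRingEnd ℂ) (h ω m) * h ω n) μ ∧
    ∫ ω, (starRingEnd ℂ) (h ω m) * h ω n ∂μ
      = ((ξ * βL : ℝ) : ℂ) * ((starRingEnd ℂ) (a m) * a n)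
        + (if m = n then ((βN : ℝ) : ℂ) else 0) := by
  have hmconj : Measurable (fun z : ℂ => (starRingEnd ℂ) z) := Complex.continuous_conj.measurable
  obtain ⟨ψ, g, hψm, hgm, hdef, hmap, hψg, hii, hL4, hmean, hsq2, hvar, hfour⟩ := hR.decomp
  set e : Ω → ℂ := fun ω => Complex.exp (-(Complex.I * (ψ ω : ℂ))) with he
  set c : Fin M → ℂ := fun k => (ξ : ℂ) * (Real.sqrt βL : ℂ) * a k with hc
  have hem : Measurable e :=
    Complex.measurable_exp.comp ((measurable_const.mul (Complex.measurable_ofReal.comp hψm)).neg)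
  have habse : ∀ ω, ‖e ω‖ = 1 := by
    intro ω; simp [he, Complex.norm_exp]
  have hconj_e_mul : ∀ ω, (starRingEnd ℂ) (e ω) * e ω = 1 := by
    intro ω
    rw [mul_comm, Complex.mul_conj, Complex.normSq_eq_norm_sq, habse]
    norm_num
  have hgk : ∀ k, Measurable (fun ω => g ω k) := fun k => (measurable_pi_apply k).comp hgm
  have hgint : ∀ k, Integrable (fun ω => g ω k) μ := by
    intro k
    refine Integrable.mono' ((integrable_const 1).add (hL4 k))
      (hgk k).aestronglyMeasurable ?_
    filter_upwards with ω
    have h0 := norm_nonneg (g ω k)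
    simp only [Pi.add_apply]
    nlinarith [sq_nonneg (‖g ω k‖ ^ 2 - 1), sq_nonneg (‖g ω k‖ - 1),
      sq_nonneg (‖g ω k‖)]
  have hg2int : ∀ k, Integrable (fun ω => (‖g ω k‖) ^ 2) μ := by
    intro k
    refine Integrable.mono' ((integrable_const 1).add (hL4 k))
      (((continuous_norm.measurable.comp (hgk k)).pow_const 2).aestronglyMeasurable) ?_
    filter_upwards with ω
    have h0 := norm_nonneg (g ω k)
    simp only [Pi.add_apply]
    rw [Real.norm_eq_abs, abs_of_nonneg (by positivity)]
    nlinarith [sq_nonneg (‖g ω k‖ ^ 2 - 1)]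
  have hgg : ∀ p q : Fin M, Integrable (fun ω => (starRingEnd ℂ) (g ω p) * g ω q) μ := by
    intro p q
    refine Integrable.mono' ((hg2int p).add (hg2int q))
      (((hmconj.comp (hgk p)).mul (hgk q)).aestronglyMeasurable) ?_
    filter_upwards with ω
    have h0 := norm_nonneg (g ω p)
    have h1 := norm_nonneg (g ω q)
    simp only [Pi.add_apply, norm_mul, Complex.norm_conj]
    nlinarith [sq_nonneg (‖g ω p‖ - ‖g ω q‖)]
  have hh : ∀ ω k, h ω k = c k * e ω + g ω k := by
    intro ω k
    rw [hdef ω k]; simp only [hc, he]; ring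
  have key : ∀ ω, (starRingEnd ℂ) (h ω m) * h ω n
      = (starRingEnd ℂ) (c m) * c n
        + (starRingEnd ℂ) (c m) * ((starRingEnd ℂ) (e ω) * g ω n)
        + c n * ((starRingEnd ℂ) (g ω m) * e ω)
        + (starRingEnd ℂ) (g ω m) * g ω n := by
    intro ω
    rw [hh ω m, hh ω n]
    simp only [map_add, map_mul]
    linear_combination ((starRingEnd ℂ) (c m) * c n) * hconj_e_mul ω
  have hceint : Integrable (fun ω => (starRingEnd ℂ) (e ω)) μ := by
    refine Integrable.mono' (integrable_const 1)
      ((hmconj.comp hem).aestronglyMeasurable) ?_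
    filter_upwards with ω
    simp [Complex.norm_conj, habse ω]
  have i1 : Integrable (fun ω => (starRingEnd ℂ) (c m) * ((starRingEnd ℂ) (e ω) * g ω n)) μ := by
    refine Integrable.const_mul ?_ _
    refine Integrable.bdd_mul (hgint n) ((hmconj.comp hem).aestronglyMeasurable)
      (c := 1) (Filter.Eventually.of_forall fun ω => ?_)
    simp [Complex.norm_conj, habse ω]
  have icge : Integrable (fun ω => (starRingEnd ℂ) (g ω m) * e ω) μ := by
    refine Integrable.mono' (hgint m).norm
      (((hmconj.comp (hgk m)).mul hem).aestronglyMeasurable) ?_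
    filter_upwards with ω
    simp [Complex.norm_conj, habse ω]
  have i2 : Integrable (fun ω => c n * ((starRingEnd ℂ) (g ω m) * e ω)) μ :=
    icge.const_mul _
  have hφe : Measurable (fun t : ℝ => (starRingEnd ℂ) (Complex.exp (-(Complex.I * (t : ℂ))))) :=
    hmconj.comp
      (Complex.measurable_exp.comp ((measurable_const.mul Complex.measurable_ofReal).neg))
  have hφe' : Measurable (fun t : ℝ => Complex.exp (-(Complex.I * (t : ℂ)))) :=
    Complex.measurable_exp.comp ((measurable_const.mul Complex.measurable_ofReal).neg)
  have ind1 : IndepFun (fun ω => (starRingEnd ℂ) (e ω)) (fun ω => g ω n) μ :=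
    hψg.comp hφe (measurable_pi_apply n)
  have ind2 : IndepFun (fun ω => (starRingEnd ℂ) (g ω m)) (fun ω => e ω) μ :=
    hψg.symm.comp (hmconj.comp (measurable_pi_apply m)) hφe'
  have hconjg : ∀ k, ∫ ω, (starRingEnd ℂ) (g ω k) ∂μ = 0 := by
    intro k
    rw [integral_conj, hmean k, map_zero]
  have hconjgint : ∀ k, Integrable (fun ω => (starRingEnd ℂ) (g ω k)) μ := by
    intro k
    refine Integrable.mono' (hgint k).norm ((hmconj.comp (hgk k)).aestronglyMeasurable) ?_
    filter_upwards with ω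
    simp [Complex.norm_conj]
  have eint : Integrable e μ := by
    refine Integrable.mono' (integrable_const 1) hem.aestronglyMeasurable ?_
    filter_upwards with ω
    simp [habse ω]
  have e1 : ∫ ω, (starRingEnd ℂ) (c m) * ((starRingEnd ℂ) (e ω) * g ω n) ∂μ = 0 := by
    rw [integral_const_mul, indep_integral_mul_complex ind1 hceint (hgint n), hmean n]
    ring
  have e2 : ∫ ω, c n * ((starRingEnd ℂ) (g ω m) * e ω) ∂μ = 0 := by
    rw [integral_const_mul, indep_integral_mul_complex ind2 (hconjgint m) eint, hconjg m]
    ring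
  have e3 : ∫ ω, (starRingEnd ℂ) (g ω m) * g ω n ∂μ
      = if m = n then ((βN : ℝ) : ℂ) else 0 := by
    by_cases hmn : m = n
    · subst hmn
      have hpt : (fun ω => (starRingEnd ℂ) (g ω m) * g ω m)
          = fun ω => ((‖g ω m‖ ^ 2 : ℝ) : ℂ) := by
        funext ω
        rw [mul_comm, Complex.mul_conj, Complex.normSq_eq_norm_sq]
      rw [hpt,
        show (∫ ω, ((‖g ω m‖ ^ 2 : ℝ) : ℂ) ∂μ)
            = ((∫ ω, (‖g ω m‖ ^ 2 : ℝ) ∂μ : ℝ) : ℂ) from integral_ofReal,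
        hvar m, if_pos rfl]
    · have indmn : IndepFun (fun ω => g ω m) (fun ω => g ω n) μ := hii.indepFun hmn
      have indmn' : IndepFun (fun ω => (starRingEnd ℂ) (g ω m)) (fun ω => g ω n) μ := by
        have := indmn.comp hmconj measurable_id
        exact this
      rw [indep_integral_mul_complex indmn' (hconjgint m) (hgint n), hconjg m, if_neg hmn]
      ring
  have hcc : (starRingEnd ℂ) (c m) * c n = ((ξ * βL : ℝ) : ℂ) * ((starRingEnd ℂ) (a m) * a n) := by
    have hxi : (ξ : ℂ) * (ξ : ℂ) = (ξ : ℂ) := by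
      rcases hR.xi01 with hx | hx <;> simp [hx]
    have hsqr : ((Real.sqrt βL : ℝ) : ℂ) * ((Real.sqrt βL : ℝ) : ℂ) = (βL : ℂ) := by
      rw [← Complex.ofReal_mul, Real.mul_self_sqrt hR.betaL_nonneg]
    simp only [hc, map_mul, Complex.conj_ofReal]
    push_cast
    linear_combination (((Real.sqrt βL : ℝ) : ℂ) * ((Real.sqrt βL : ℝ) : ℂ)
        * (starRingEnd ℂ) (a m) * a n) * hxi
      + ((ξ : ℂ) * (starRingEnd ℂ) (a m) * a n) * hsqr
  have hfn : (fun ω => (starRingEnd ℂ) (h ω m) * h ω n)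
      = fun ω => (starRingEnd ℂ) (c m) * c n
        + (starRingEnd ℂ) (c m) * ((starRingEnd ℂ) (e ω) * g ω n)
        + c n * ((starRingEnd ℂ) (g ω m) * e ω)
        + (starRingEnd ℂ) (g ω m) * g ω n := funext key
  have j1 : Integrable (fun ω => (starRingEnd ℂ) (c m) * c n
      + (starRingEnd ℂ) (c m) * ((starRingEnd ℂ) (e ω) * g ω n)) μ :=
    (integrable_const _).add i1
  have j2 : Integrable (fun ω => ((starRingEnd ℂ) (c m) * c n
      + (starRingEnd ℂ) (c m) * ((starRingEnd ℂ) (e ω) * g ω n))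
      + c n * ((starRingEnd ℂ) (g ω m) * e ω)) μ := j1.add i2
  constructor
  · rw [hfn]
    exact j2.add (hgg m n)
  · rw [hfn]
    rw [integral_add j2 (hgg m n), integral_add j1 i2,
      integral_add (integrable_const _) i1,
      integral_const, e1, e2, e3, hcc]
    simp

lemma rician_pair_integral' [IsProbabilityMeasure μ] {M : ℕ} {ξ βL βN : ℝ}
    {a : Fin M → ℂ} {h : Ω → Fin M → ℂ} (hR : IsRicianBlock μ ξ βL βN a h) (m n : Fin M) :
    Integrable (fun ω => h ω m * (starRingEnd ℂ) (h ω n)) μ ∧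
    ∫ ω, h ω m * (starRingEnd ℂ) (h ω n) ∂μ
      = ((ξ * βL : ℝ) : ℂ) * (a m * (starRingEnd ℂ) (a n))
        + (if m = n then ((βN : ℝ) : ℂ) else 0) := by
  obtain ⟨hi, he⟩ := rician_pair_integral hR m n
  have hfn : (fun ω => h ω m * (starRingEnd ℂ) (h ω n))
      = fun ω => (starRingEnd ℂ) ((starRingEnd ℂ) (h ω m) * h ω n) := by
    funext ω
    simp only [map_mul, Complex.conj_conj]
  constructor
  · rw [hfn]
    refine Integrable.mono' hi.norm
      (Complex.continuous_conj.comp_aestronglyMeasurable hi.aestronglyMeasurable) ?_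
    filter_upwards with ω
    simp [Complex.norm_conj]
  · rw [hfn, integral_conj, he]
    by_cases hmn : m = n
    · simp only [if_pos hmn, map_add, map_mul, Complex.conj_conj, Complex.conj_ofReal]
    · simp only [if_neg hmn, add_zero, map_add, map_zero, map_mul, Complex.conj_conj,
        Complex.conj_ofReal]

end helpers

/-- For independent Rician channel blocks `h` and `h'` with respective
parameters `(ξ, βL, βN, a)` and `(ξ', βL', βN', a')`, the mean interference power is
`E[|hᴴ h'|²] = ξ·ξ'·βL·βL'·|aᴴ a'|² + M·βN·βN' + M·ξ·βL·βN' + M·ξ'·βN·βL'`. -/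
theorem stmt11 {Ω : Type*} [MeasurableSpace Ω] (μ : Measure Ω) [IsProbabilityMeasure μ]
    (M : ℕ) (hM : 0 < M) (ξ βL βN ξ' βL' βN' : ℝ)
    (a a' : Fin M → ℂ) (h h' : Ω → Fin M → ℂ)
    (hR : IsRicianBlock μ ξ βL βN a h)
    (hR' : IsRicianBlock μ ξ' βL' βN' a' h')
    (hindep : IndepFun h h' μ) :
    ∫ ω, (‖∑ m, (starRingEnd ℂ) (h ω m) * h' ω m‖) ^ 2 ∂μ
      = ξ * ξ' * βL * βL' * (‖∑ m, (starRingEnd ℂ) (a m) * a' m‖) ^ 2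
        + M * βN * βN' + M * ξ * βL * βN' + M * ξ' * βN * βL' := by
  classical
  have hmconj : Measurable (fun z : ℂ => (starRingEnd ℂ) z) := Complex.continuous_conj.measurable
  have hX := fun m n => rician_pair_integral hR m n
  have hY := fun m n => rician_pair_integral' hR' m n
  have hindmn : ∀ m n : Fin M,
      IndepFun (fun ω => (starRingEnd ℂ) (h ω m) * h ω n)
        (fun ω => h' ω m * (starRingEnd ℂ) (h' ω n)) μ := by
    intro m n
    have := hindep.comp
      (φ := fun v : Fin M → ℂ => (starRingEnd ℂ) (v m) * v n)
      (ψ := fun v : Fin M → ℂ => v m * (starRingEnd ℂ) (v n))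
      ((hmconj.comp (measurable_pi_apply m)).mul (measurable_pi_apply n))
      (Measurable.mul (f := fun v : Fin M → ℂ => v m) (g := fun v : Fin M → ℂ => (starRingEnd ℂ) (v n))
        (measurable_pi_apply m) (hmconj.comp (measurable_pi_apply n)))
    exact this
  have hprod : ∀ m n : Fin M,
      Integrable (fun ω => ((starRingEnd ℂ) (h ω m) * h ω n)
        * (h' ω m * (starRingEnd ℂ) (h' ω n))) μ := by
    intro m n
    simpa [Pi.mul_def] using (hindmn m n).integrable_mul (hX m n).1 (hY m n).1
  have hint : ∀ m n : Fin M,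
      ∫ ω, ((starRingEnd ℂ) (h ω m) * h ω n) * (h' ω m * (starRingEnd ℂ) (h' ω n)) ∂μ
        = (((ξ * βL : ℝ) : ℂ) * ((starRingEnd ℂ) (a m) * a n)
            + (if m = n then ((βN : ℝ) : ℂ) else 0))
          * (((ξ' * βL' : ℝ) : ℂ) * (a' m * (starRingEnd ℂ) (a' n))
            + (if m = n then ((βN' : ℝ) : ℂ) else 0)) := by
    intro m n
    rw [indep_integral_mul_complex (hindmn m n) (hX m n).1 (hY m n).1, (hX m n).2, (hY m n).2]
  set F : Ω → ℂ := fun ω => ∑ m, ∑ n,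
    ((starRingEnd ℂ) (h ω m) * h ω n) * (h' ω m * (starRingEnd ℂ) (h' ω n)) with hF
  have hFint : Integrable F μ :=
    integrable_finset_sum _ fun m _ => integrable_finset_sum _ fun n _ => hprod m n
  have hpt : ∀ ω, (‖∑ m, (starRingEnd ℂ) (h ω m) * h' ω m‖) ^ 2 = (F ω).re := by
    intro ω
    have hS : (∑ m, (starRingEnd ℂ) (h ω m) * h' ω m)
        * (starRingEnd ℂ) (∑ m, (starRingEnd ℂ) (h ω m) * h' ω m) = F ω := by
      rw [map_sum, Finset.sum_mul_sum]
      refine Finset.sum_congr rfl fun m _ => Finset.sum_congr rfl fun n _ => ?_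
      simp only [map_mul, Complex.conj_conj]
      ring
    rw [← hS, Complex.mul_conj, Complex.normSq_eq_norm_sq]
    simp [← Complex.ofReal_pow]
  have hstep1 : ∫ ω, (‖∑ m, (starRingEnd ℂ) (h ω m) * h' ω m‖) ^ 2 ∂μ
      = (∫ ω, F ω ∂μ).re := by
    rw [show (fun ω => (‖∑ m, (starRingEnd ℂ) (h ω m) * h' ω m‖) ^ 2)
        = fun ω => (F ω).re from funext hpt]
    simpa using integral_re hFint
  have hstep2 : ∫ ω, F ω ∂μ = ∑ m : Fin M, ∑ n : Fin M,
      (((ξ * βL : ℝ) : ℂ) * ((starRingEnd ℂ) (a m) * a n)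
          + (if m = n then ((βN : ℝ) : ℂ) else 0))
        * (((ξ' * βL' : ℝ) : ℂ) * (a' m * (starRingEnd ℂ) (a' n))
          + (if m = n then ((βN' : ℝ) : ℂ) else 0)) := by
    rw [hF, integral_finset_sum _ fun m _ => integrable_finset_sum _ fun n _ => hprod m n]
    refine Finset.sum_congr rfl fun m _ => ?_
    rw [integral_finset_sum _ fun n _ => hprod m n]
    exact Finset.sum_congr rfl fun n _ => hint m n
  -- algebraic evaluation of the double sum
  have ha1 : ∀ m, (starRingEnd ℂ) (a m) * a m = 1 := by
    intro m
    rw [mul_comm, Complex.mul_conj, Complex.normSq_eq_norm_sq, hR.unit_modulus]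
    norm_num
  have ha'1 : ∀ m, a' m * (starRingEnd ℂ) (a' m) = 1 := by
    intro m
    rw [Complex.mul_conj, Complex.normSq_eq_norm_sq, hR'.unit_modulus]
    norm_num
  have hPQ : ∀ m n : Fin M,
      (((ξ * βL : ℝ) : ℂ) * ((starRingEnd ℂ) (a m) * a n)
          + (if m = n then ((βN : ℝ) : ℂ) else 0))
        * (((ξ' * βL' : ℝ) : ℂ) * (a' m * (starRingEnd ℂ) (a' n))
          + (if m = n then ((βN' : ℝ) : ℂ) else 0))
      = (((ξ * βL) * (ξ' * βL') : ℝ) : ℂ)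
          * (((starRingEnd ℂ) (a m) * a' m) * (a n * (starRingEnd ℂ) (a' n)))
        + (if m = n then ((ξ * βL * βN' + ξ' * βL' * βN + βN * βN' : ℝ) : ℂ) else 0) := by
    intro m n
    by_cases hmn : m = n
    · subst hmn
      simp only [if_pos rfl]
      push_cast
      linear_combination ((ξ : ℂ) * (βL : ℂ) * (βN' : ℂ)) * ha1 m
        + ((ξ' : ℂ) * (βL' : ℂ) * (βN : ℂ)) * ha'1 m
    · simp only [if_neg hmn, add_zero]
      push_cast
      ring
  have hsum : (∑ m : Fin M, ∑ n : Fin M,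
      (((ξ * βL : ℝ) : ℂ) * ((starRingEnd ℂ) (a m) * a n)
          + (if m = n then ((βN : ℝ) : ℂ) else 0))
        * (((ξ' * βL' : ℝ) : ℂ) * (a' m * (starRingEnd ℂ) (a' n))
          + (if m = n then ((βN' : ℝ) : ℂ) else 0)))
      = (((ξ * βL) * (ξ' * βL') : ℝ) : ℂ)
          * ((∑ m, (starRingEnd ℂ) (a m) * a' m) * (∑ n, a n * (starRingEnd ℂ) (a' n)))
        + (M : ℂ) * ((ξ * βL * βN' + ξ' * βL' * βN + βN * βN' : ℝ) : ℂ) := by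
    rw [Finset.sum_congr rfl fun m _ => Finset.sum_congr rfl fun n _ => hPQ m n]
    rw [Finset.sum_congr rfl fun m (_ : m ∈ Finset.univ) => Finset.sum_add_distrib]
    rw [Finset.sum_add_distrib]
    congr 1
    · rw [Finset.sum_mul_sum]
      simp only [Finset.mul_sum]
    · simp [Finset.sum_ite_eq, Finset.card_univ, mul_comm]
      ring
  have hB : (∑ n, a n * (starRingEnd ℂ) (a' n))
      = (starRingEnd ℂ) (∑ m, (starRingEnd ℂ) (a m) * a' m) := by
    rw [map_sum]
    refine Finset.sum_congr rfl fun n _ => ?_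
    simp only [map_mul, Complex.conj_conj]
  have hfinal : ∫ ω, F ω ∂μ
      = ((ξ * ξ' * βL * βL' * (‖∑ m, (starRingEnd ℂ) (a m) * a' m‖) ^ 2
          + M * βN * βN' + M * ξ * βL * βN' + M * ξ' * βN * βL' : ℝ) : ℂ) := by
    rw [hstep2, hsum, hB, Complex.mul_conj, Complex.normSq_eq_norm_sq]
    push_cast
    ring
  rw [hstep1, hfinal, Complex.ofReal_re]
end
end
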